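/- Fix x ∈ [0.1, 0.9] and ε with 0 < ε ≤ 1/1600, and let F_x be the explicit piecewise function defined in the context. Then F_x(x + 2√ε) = x + 2√ε + ε, and consequently for every η with 0 ≤ η < ε/2 the Levy-distance condition fails at v = x + 2√ε: F_x(v) > (v + η) + η, where v + η is the value of the uniform cdf F*(v) = v at v + η. Hence the Levy distance between the distribution with cdf F_x and the uniform distribution on [0,1] is at least ε/2. -/
import Mathlib


/-- The cdf `F_x` of the perturbed uniform distribution `D_x`. -/
noncomputable def Fx (x ε : ℝ) (v : ℝ) : ℝ :=
  if v < x then v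
  else if v ≤ x + Real.sqrt ε then v + (v - x) ^ 2 / 2
  else if v < x + 2 * Real.sqrt ε then v + ε - (x + 2 * Real.sqrt ε - v) ^ 2 / 2
  else if v < x + 3 * Real.sqrt ε then v + ε - (v - x - 2 * Real.sqrt ε) ^ 2 / 2
  else if v ≤ x + 4 * Real.sqrt ε then v + (x + 4 * Real.sqrt ε - v) ^ 2 / 2
  else v

/-- `F_x(x + 2√ε) = x + 2√ε + ε`; hence for every `η < ε/2` the Levy-distance condition
against the uniform cdf `F*(v) = v` fails at `v = x + 2√ε`, so the Levy distance between
`D_x` and the uniform distribution is at least `ε/2`. -/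
theorem Fx_levy_far_from_uniform (x ε : ℝ) (hx : x ∈ Set.Icc (0.1:ℝ) 0.9)
    (hε : 0 < ε) (hε' : ε ≤ 1 / 1600) :
    Fx x ε (x + 2 * Real.sqrt ε) = x + 2 * Real.sqrt ε + ε ∧
    (∀ η : ℝ, 0 ≤ η → η < ε / 2 →
      Fx x ε (x + 2 * Real.sqrt ε) > ((x + 2 * Real.sqrt ε) + η) + η) ∧
    (∀ η : ℝ, 0 ≤ η →
      (∀ v ∈ Set.Icc (0:ℝ) 1, (v - η) - η ≤ Fx x ε v ∧ Fx x ε v ≤ (v + η) + η) →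
      η ≥ ε / 2) := by
  obtain ⟨hx1, hx2⟩ := hx
  have hs : 0 < Real.sqrt ε := Real.sqrt_pos.mpr hε
  have hs' : Real.sqrt ε ≤ 1 / 40 := by
    have : Real.sqrt ε ≤ Real.sqrt (1 / 1600) := Real.sqrt_le_sqrt hε'
    calc Real.sqrt ε ≤ Real.sqrt (1 / 1600) := this
      _ = 1 / 40 := by
        rw [show (1:ℝ)/1600 = (1/40)^2 by norm_num, Real.sqrt_sq (by norm_num)]
  have key : Fx x ε (x + 2 * Real.sqrt ε) = x + 2 * Real.sqrt ε + ε := by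
    unfold Fx
    rw [if_neg (by linarith), if_neg (by linarith), if_neg (by linarith),
      if_pos (by linarith)]
    ring
  refine ⟨key, fun η h0 hlt => by rw [key]; nlinarith, fun η h0 h => ?_⟩
  have hv : x + 2 * Real.sqrt ε ∈ Set.Icc (0:ℝ) 1 := by
    constructor <;> [linarith; linarith [hx2, hs']]
  have := (h _ hv).2
  rw [key] at this
  linarith
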